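/- (Weighted Inaba Lemma.) With the sampling setup below, assume V > 0. Then for every real δ with 0 < δ ≤ 1, ℙ({r : Fin m → ι | Σ_i (w i : ℝ) · ‖s i − μ(r)‖² < (1 + 1/(δ · m)) · V}) ≥ 1 − δ. -/

import Mathlib

open Finset

lemma sum_prod_pi {ι : Type*} [Fintype ι] {m : ℕ} (F : Fin m → ι → ℝ) :
    ∑ r : Fin m → ι, ∏ l, F l (r l) = ∏ l, ∑ i, F l i := by
  rw [Finset.prod_univ_sum, Fintype.piFinset_univ]

lemma marg1 {ι : Type*} [Fintype ι] {m : ℕ} (f g : ι → ℝ) (hf1 : ∑ i, f i = 1)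
    (j : Fin m) :
    ∑ r : Fin m → ι, (∏ l, f (r l)) * g (r j) = ∑ i, f i * g i := by
  have h1 : ∀ r : Fin m → ι, (∏ l, f (r l)) * g (r j)
      = ∏ l, (f (r l) * if l = j then g (r l) else 1) := by
    intro r
    rw [Finset.prod_mul_distrib, Finset.prod_ite_eq' Finset.univ j (fun l => g (r l))]
    simp
  simp_rw [h1]
  rw [sum_prod_pi (fun l i => f i * if l = j then g i else 1)]
  have h2 : ∀ l : Fin m, (∑ i, f i * if l = j then g i else 1)
      = if l = j then ∑ i, f i * g i else 1 := by
    intro l; split <;> simp [hf1]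
  simp_rw [h2]
  rw [Finset.prod_ite_eq' Finset.univ j (fun _ => ∑ i, f i * g i)]
  simp

lemma marg2 {ι : Type*} [Fintype ι] {m : ℕ} (f g h : ι → ℝ) (hf1 : ∑ i, f i = 1)
    {j k : Fin m} (hjk : j ≠ k) :
    ∑ r : Fin m → ι, (∏ l, f (r l)) * (g (r j) * h (r k))
      = (∑ i, f i * g i) * (∑ i, f i * h i) := by
  have h1 : ∀ r : Fin m → ι, (∏ l, f (r l)) * (g (r j) * h (r k))
      = ∏ l, (f (r l) * ((if l = j then g (r l) else 1) * (if l = k then h (r l) else 1))) := by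
    intro r
    simp_rw [← mul_assoc]
    rw [Finset.prod_mul_distrib, Finset.prod_mul_distrib,
      Finset.prod_ite_eq' Finset.univ j (fun l => g (r l)),
      Finset.prod_ite_eq' Finset.univ k (fun l => h (r l))]
    simp [mul_assoc]
  simp_rw [h1]
  rw [sum_prod_pi (fun l i => f i * ((if l = j then g i else 1) * if l = k then h i else 1))]
  have h2 : ∀ l : Fin m, (∑ i, f i * ((if l = j then g i else 1) * (if l = k then h i else 1)))
      = (if l = j then ∑ i, f i * g i else 1) * (if l = k then ∑ i, f i * h i else 1) := by
    intro l
    rcases eq_or_ne l j with rfl | hlj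
    · simp [hjk, hf1]
    · rcases eq_or_ne l k with rfl | hlk
      · simp [hlj, hf1]
      · simp [hlj, hlk, hf1]
  simp_rw [h2]
  rw [Finset.prod_mul_distrib,
    Finset.prod_ite_eq' Finset.univ j (fun _ => ∑ i, f i * g i),
    Finset.prod_ite_eq' Finset.univ k (fun _ => ∑ i, f i * h i)]
  simp

/-- The total weight `W = Σ_i w i`. -/
noncomputable def totalWeight {ι : Type*} [Fintype ι] (w : ι → ℕ) : ℝ :=
  ∑ i, (w i : ℝ)

/-- The weighted mean `μ_w = (1/W) · Σ_i w i • s i`. -/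
noncomputable def weightedMean {d : ℕ} {ι : Type*} [Fintype ι]
    (s : ι → EuclideanSpace ℝ (Fin d)) (w : ι → ℕ) : EuclideanSpace ℝ (Fin d) :=
  (1 / totalWeight w) • ∑ i, (w i : ℝ) • s i

/-- The total weighted squared distance to the weighted mean,
`V = Σ_i w i · ‖s i − μ_w‖²`. -/
noncomputable def weightedVar {d : ℕ} {ι : Type*} [Fintype ι]
    (s : ι → EuclideanSpace ℝ (Fin d)) (w : ι → ℕ) : ℝ :=
  ∑ i, (w i : ℝ) * ‖s i - weightedMean s w‖ ^ 2

/-- The probability mass function `f(i) = w i / W`. -/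
noncomputable def pmfWeight {ι : Type*} [Fintype ι] (w : ι → ℕ) (i : ι) : ℝ :=
  (w i : ℝ) / totalWeight w

/-- The product probability mass on `Fin m → ι` under which the `m` coordinates
are independent samples distributed according to `pmfWeight w`. -/
noncomputable def prodProb {ι : Type*} [Fintype ι] (w : ι → ℕ) {m : ℕ}
    (r : Fin m → ι) : ℝ :=
  ∏ j, pmfWeight w (r j)

/-- The sample mean `μ(r) = (1/m) · Σ_j s (r j)`. -/
noncomputable def sampleMean {d : ℕ} {ι : Type*} {m : ℕ}
    (s : ι → EuclideanSpace ℝ (Fin d)) (r : Fin m → ι) : EuclideanSpace ℝ (Fin d) :=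
  (1 / (m : ℝ)) • ∑ j, s (r j)

open scoped Classical in
/-- Weighted Inaba Lemma. -/
theorem weighted_inaba {d : ℕ} {ι : Type*} [Fintype ι] [Nonempty ι]
    (s : ι → EuclideanSpace ℝ (Fin d)) (w : ι → ℕ) (hw : ∀ i, 1 ≤ w i)
    {m : ℕ} (hm : 1 ≤ m) (hV : 0 < weightedVar s w)
    {δ : ℝ} (hδ : δ ∈ Set.Ioc (0 : ℝ) 1) :
    1 - δ ≤
      ∑ r ∈ Finset.univ.filter (fun r : Fin m → ι =>
          ∑ i, (w i : ℝ) * ‖s i - sampleMean s r‖ ^ 2 <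
            (1 + 1 / (δ * m)) * weightedVar s w),
        prodProb w r := by
  obtain ⟨hδ0, hδ1⟩ := hδ
  have hm0 : (0:ℝ) < m := by exact_mod_cast Nat.lt_of_lt_of_le Nat.zero_lt_one hm
  have hmR : (m:ℝ) ≠ 0 := ne_of_gt hm0
  set μ := weightedMean s w with hμdef
  set V := weightedVar s w with hVdef
  set W := totalWeight w with hWdef
  have hW : 0 < W := by
    rw [hWdef, totalWeight]
    apply Finset.sum_pos _ Finset.univ_nonempty
    intro i _
    exact_mod_cast hw i
  set f := pmfWeight w with hfdef
  have hWsum : (∑ i, (w i : ℝ)) = W := rfl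
  have hfi : ∀ i, f i = (w i : ℝ) / W := fun i => rfl
  have hf0 : ∀ i, 0 ≤ f i := fun i => by
    rw [hfi]; exact div_nonneg (Nat.cast_nonneg _) hW.le
  have hf1 : ∑ i, f i = 1 := by
    simp_rw [hfi]
    rw [← Finset.sum_div, hWsum]
    exact div_self hW.ne'
  have hμW : ∑ i, (w i : ℝ) • s i = W • μ := by
    rw [hμdef, weightedMean, smul_smul]
    rw [mul_one_div, ← hWdef, div_self hW.ne', one_smul]
  set t : ι → EuclideanSpace ℝ (Fin d) := fun i => s i - μ with htdef
  have hcross : ∑ i, (w i : ℝ) • t i = 0 := by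
    simp_rw [htdef, smul_sub]
    rw [Finset.sum_sub_distrib, hμW, ← Finset.sum_smul, hWsum, sub_self]
  have hinner0 : ∀ a : EuclideanSpace ℝ (Fin d),
      ∑ i, (w i : ℝ) * (inner ℝ (t i) a : ℝ) = 0 := by
    intro a
    have h : ∑ i, (w i : ℝ) * (inner ℝ (t i) a : ℝ)
        = (inner ℝ (∑ i, (w i : ℝ) • t i) a : ℝ) := by
      rw [sum_inner]
      simp_rw [real_inner_smul_left]
    rw [h, hcross, inner_zero_left]
  have hVt : ∑ i, (w i : ℝ) * ‖t i‖ ^ 2 = V := rfl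
  have K : ∀ a : EuclideanSpace ℝ (Fin d),
      ∑ i, (w i : ℝ) * ‖s i - a‖ ^ 2 = V + W * ‖μ - a‖ ^ 2 := by
    intro a
    have hexp : ∀ i, ‖s i - a‖ ^ 2
        = ‖t i‖ ^ 2 + 2 * (inner ℝ (t i) (μ - a) : ℝ) + ‖μ - a‖ ^ 2 := by
      intro i
      calc ‖s i - a‖ ^ 2 = ‖(s i - μ) + (μ - a)‖ ^ 2 := by rw [sub_add_sub_cancel]
        _ = ‖t i‖ ^ 2 + 2 * (inner ℝ (t i) (μ - a) : ℝ) + ‖μ - a‖ ^ 2 :=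
          norm_add_sq_real _ _
    simp_rw [hexp, mul_add]
    rw [Finset.sum_add_distrib, Finset.sum_add_distrib, hVt]
    have h2 : ∑ i, (w i : ℝ) * (2 * (inner ℝ (t i) (μ - a) : ℝ)) = 0 := by
      have h2' : ∀ i, (w i : ℝ) * (2 * (inner ℝ (t i) (μ - a) : ℝ))
          = 2 * ((w i : ℝ) * (inner ℝ (t i) (μ - a) : ℝ)) := fun i => by ring
      simp_rw [h2']
      rw [← Finset.mul_sum, hinner0, mul_zero]
    have h3 : ∑ i, (w i : ℝ) * ‖μ - a‖ ^ 2 = W * ‖μ - a‖ ^ 2 := by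
      rw [← Finset.sum_mul, hWsum]
    rw [h2, h3, add_zero]
  have hVW : ∑ i, f i * ‖t i‖ ^ 2 = V / W := by
    have h : ∀ i, f i * ‖t i‖ ^ 2 = ((w i : ℝ) * ‖t i‖ ^ 2) / W := by
      intro i; rw [hfi]; ring
    simp_rw [h]
    rw [← Finset.sum_div, hVt]
  have hwt0 : ∀ c : Fin d, ∑ i, (w i : ℝ) * t i c = 0 := by
    intro c
    have h := congrArg (EuclideanSpace.proj c) hcross
    rw [map_sum, map_zero] at h
    simpa using h
  have hft0 : ∀ c : Fin d, ∑ i, f i * t i c = 0 := by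
    intro c
    have h : ∀ i, f i * t i c = ((w i : ℝ) * t i c) / W := by
      intro i; rw [hfi]; ring
    simp_rw [h]
    rw [← Finset.sum_div, hwt0 c, zero_div]
  -- sample mean decomposition
  have hsampleSub : ∀ r : Fin m → ι,
      sampleMean s r - μ = (1 / (m : ℝ)) • ∑ j, t (r j) := by
    intro r
    have h : ∑ j : Fin m, t (r j) = (∑ j, s (r j)) - (m : ℝ) • μ := by
      simp_rw [htdef]
      rw [Finset.sum_sub_distrib, Finset.sum_const, Finset.card_univ, Fintype.card_fin]
      norm_num [← Nat.cast_smul_eq_nsmul ℝ]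
    rw [h, smul_sub, smul_smul, one_div, inv_mul_cancel₀ hmR, one_smul]
    show (1 / (m : ℝ)) • ∑ j, s (r j) - μ = _
    rw [one_div]
  have hnorm : ∀ r : Fin m → ι,
      W * ‖μ - sampleMean s r‖ ^ 2 = (W / (m : ℝ) ^ 2) * ‖∑ j, t (r j)‖ ^ 2 := by
    intro r
    rw [norm_sub_rev, hsampleSub r, norm_smul]
    have habs : ‖(1 / (m : ℝ))‖ = 1 / (m : ℝ) := by
      rw [Real.norm_eq_abs]; exact abs_of_nonneg (by positivity)
    rw [habs, mul_pow]
    ring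
  -- expectation of the squared norm
  have hAdiag : ∀ j : Fin m,
      ∑ r : Fin m → ι, (∏ l, f (r l)) * ‖t (r j)‖ ^ 2 = V / W := by
    intro j
    rw [marg1 f (fun i => ‖t i‖ ^ 2) hf1 j, hVW]
  have hAoff : ∀ j k : Fin m, j ≠ k →
      ∑ r : Fin m → ι, (∏ l, f (r l)) * (inner ℝ (t (r j)) (t (r k)) : ℝ) = 0 := by
    intro j k hjk
    have hin : ∀ x y : EuclideanSpace ℝ (Fin d), (inner ℝ x y : ℝ) = ∑ c, x c * y c := by
      intro x y
      rw [PiLp.inner_apply]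
      simp [RCLike.inner_apply, mul_comm]
    simp_rw [hin, Finset.mul_sum]
    rw [Finset.sum_comm]
    have h : ∀ c : Fin d,
        ∑ r : Fin m → ι, (∏ l, f (r l)) * (t (r j) c * t (r k) c) = 0 := by
      intro c
      rw [marg2 f (fun i => t i c) (fun i => t i c) hf1 hjk, hft0 c, mul_zero]
    simp_rw [h]
    exact Finset.sum_const_zero
  have hQ : ∑ r : Fin m → ι, (∏ l, f (r l)) * ‖∑ j, t (r j)‖ ^ 2 = m * (V / W) := by
    have hsq : ∀ r : Fin m → ι,
        ‖∑ j, t (r j)‖ ^ 2 = ∑ j, ∑ k, (inner ℝ (t (r j)) (t (r k)) : ℝ) := by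
      intro r
      rw [← real_inner_self_eq_norm_sq, sum_inner]
      simp_rw [inner_sum]
    simp_rw [hsq, Finset.mul_sum]
    rw [Finset.sum_comm]
    have hswap : ∀ j : Fin m,
        (∑ r : Fin m → ι, ∑ k : Fin m, (∏ l, f (r l)) * (inner ℝ (t (r j)) (t (r k)) : ℝ))
        = ∑ k : Fin m, ∑ r : Fin m → ι, (∏ l, f (r l)) * (inner ℝ (t (r j)) (t (r k)) : ℝ) :=
      fun j => Finset.sum_comm

    simp_rw [hswap]
    have hA : ∀ j k : Fin m,
        (∑ r : Fin m → ι, (∏ l, f (r l)) * (inner ℝ (t (r j)) (t (r k)) : ℝ))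
        = if j = k then V / W else 0 := by
      intro j k
      rcases eq_or_ne j k with rfl | hjk
      · rw [if_pos rfl]
        have h : ∀ r : Fin m → ι, (inner ℝ (t (r j)) (t (r j)) : ℝ) = ‖t (r j)‖ ^ 2 :=
          fun r => real_inner_self_eq_norm_sq _
        simp_rw [h]
        exact hAdiag j
      · rw [if_neg hjk]
        exact hAoff j k hjk
    simp_rw [hA]
    simp [Finset.sum_ite_eq, Finset.card_univ]
  have hE : ∑ r : Fin m → ι, prodProb w r * (W * ‖μ - sampleMean s r‖ ^ 2) = V / m := by
    have h : ∀ r : Fin m → ι, prodProb w r * (W * ‖μ - sampleMean s r‖ ^ 2)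
        = (W / (m : ℝ) ^ 2) * ((∏ l, f (r l)) * ‖∑ j, t (r j)‖ ^ 2) := by
      intro r
      rw [hnorm r]
      show (∏ l, f (r l)) * _ = _
      ring
    simp_rw [h]
    rw [← Finset.mul_sum, hQ]
    field_simp
  -- Markov
  have hsum1 : ∑ r : Fin m → ι, prodProb w r = 1 := by
    show ∑ r : Fin m → ι, ∏ l, f (r l) = 1
    rw [sum_prod_pi (fun _ i => f i)]
    simp [hf1]
  have hp0 : ∀ r : Fin m → ι, 0 ≤ prodProb w r :=
    fun r => Finset.prod_nonneg (fun l _ => hf0 _)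
  have hterm0 : ∀ r : Fin m → ι, 0 ≤ prodProb w r * (W * ‖μ - sampleMean s r‖ ^ 2) :=
    fun r => mul_nonneg (hp0 r) (mul_nonneg hW.le (sq_nonneg _))
  set P : (Fin m → ι) → Prop := fun r =>
    ∑ i, (w i : ℝ) * ‖s i - sampleMean s r‖ ^ 2 < (1 + 1 / (δ * m)) * V with hPdef
  have hδm : (0:ℝ) < δ * m := mul_pos hδ0 hm0
  have hsplit := Finset.sum_filter_add_sum_filter_not Finset.univ P (prodProb w)
  rw [hsum1] at hsplit
  have hC : ∑ r ∈ Finset.univ.filter (fun r => ¬ P r), prodProb w r ≤ δ := by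
    have hkey : ∀ r ∈ Finset.univ.filter (fun r => ¬ P r),
        prodProb w r * (V / (δ * m)) ≤ prodProb w r * (W * ‖μ - sampleMean s r‖ ^ 2) := by
      intro r hr
      rw [Finset.mem_filter] at hr
      have hge : (1 + 1 / (δ * m)) * V ≤ ∑ i, (w i : ℝ) * ‖s i - sampleMean s r‖ ^ 2 :=
        not_lt.mp hr.2
      rw [K (sampleMean s r)] at hge
      have h : V / (δ * m) ≤ W * ‖μ - sampleMean s r‖ ^ 2 := by
        have : (1 + 1 / (δ * m)) * V = V + V / (δ * m) := by ring
        linarith [this ▸ hge]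
      exact mul_le_mul_of_nonneg_left h (hp0 r)
    have hchain : (V / (δ * m)) * ∑ r ∈ Finset.univ.filter (fun r => ¬ P r), prodProb w r
        ≤ V / m := by
      calc (V / (δ * m)) * ∑ r ∈ Finset.univ.filter (fun r => ¬ P r), prodProb w r
          = ∑ r ∈ Finset.univ.filter (fun r => ¬ P r), prodProb w r * (V / (δ * m)) := by
            rw [Finset.mul_sum]; simp_rw [mul_comm]
        _ ≤ ∑ r ∈ Finset.univ.filter (fun r => ¬ P r),
              prodProb w r * (W * ‖μ - sampleMean s r‖ ^ 2) := Finset.sum_le_sum hkey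
        _ ≤ ∑ r : Fin m → ι, prodProb w r * (W * ‖μ - sampleMean s r‖ ^ 2) :=
            Finset.sum_le_sum_of_subset_of_nonneg (Finset.filter_subset _ _)
              (fun r _ _ => hterm0 r)
        _ = V / m := hE
    have ha : (0:ℝ) < V / (δ * m) := div_pos hV hδm
    have haδ : (V / (δ * m)) * δ = V / m := by
      field_simp
    exact le_of_mul_le_mul_left (hchain.trans_eq haδ.symm) ha
  linarith
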